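/- There exist disjoint Borel sets P, N ⊆ ℝ such that the Lebesgue measure of ℝ \ (P ∪ N) is zero, and for every nonempty bounded open interval I ⊆ ℝ both I ∩ P and I ∩ N have strictly positive Lebesgue measure. -/

import Mathlib

open MeasureTheory Set

lemma no_rat_interior {K : Set ℝ} (h : ∀ q : ℚ, (q:ℝ) ∉ K) : interior K = ∅ := by
  rw [interior_eq_empty_iff_dense_compl]
  exact Rat.denseRange_cast.mono (range_subset_iff.2 fun q => h q)

lemma union_nd {s t : Set ℝ} (hs : IsClosed s) (ht : IsClosed t)
    (hsi : interior s = ∅) (hti : interior t = ∅) : interior (s ∪ t) = ∅ := by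
  rw [interior_eq_empty_iff_dense_compl] at *
  rw [compl_union]
  exact hsi.inter_of_isOpen_left hti hs.isOpen_compl

lemma exists_fat (a b : ℝ) (hab : a < b) :
    ∃ K : Set ℝ, K ⊆ Ioo a b ∧ IsClosed K ∧ interior K = ∅ ∧ 0 < volume K := by
  set δ := b - a with hδdef
  have hδ : 0 < δ := sub_pos.2 hab
  set q : ℕ → ℚ := fun n => (Denumerable.eqv ℚ).symm n with hq
  set U : Set ℝ := ⋃ n, Metric.ball ((q n : ℝ)) ((δ/32) * (1/2)^n) with hU
  have hUopen : IsOpen U := isOpen_iUnion fun n => Metric.isOpen_ball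
  have hrat : ∀ r : ℚ, (r : ℝ) ∈ U := by
    intro r
    refine mem_iUnion.2 ⟨Denumerable.eqv ℚ r, ?_⟩
    have : q (Denumerable.eqv ℚ r) = r := (Denumerable.eqv ℚ).symm_apply_apply r
    rw [this, Metric.mem_ball, dist_self]
    positivity
  have hUvol : volume U ≤ ENNReal.ofReal (δ/8) := by
    calc volume U ≤ ∑' n, volume (Metric.ball ((q n : ℝ)) ((δ/32) * (1/2)^n)) := measure_iUnion_le _
    _ = ∑' n, ENNReal.ofReal (2 * ((δ/32) * (1/2)^n)) := by
        congr 1; ext n; rw [Real.volume_ball]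
    _ = ∑' n, ENNReal.ofReal (δ/16) * (ENNReal.ofReal (1/2))^n := by
        congr 1; ext n
        rw [← ENNReal.ofReal_pow (by norm_num), ← ENNReal.ofReal_mul (by linarith)]
        ring_nf
    _ = ENNReal.ofReal (δ/16) * (1 - ENNReal.ofReal (1/2))⁻¹ := by
        rw [ENNReal.tsum_mul_left, ENNReal.tsum_geometric]
    _ = ENNReal.ofReal (δ/16) * 2 := by
        norm_num [ENNReal.ofReal_div_of_pos]
    _ ≤ ENNReal.ofReal (δ/8) := by
        rw [← ENNReal.ofReal_ofNat, ← ENNReal.ofReal_mul (by linarith)]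
        exact ENNReal.ofReal_le_ofReal (le_of_eq (by ring))
  refine ⟨Icc (a + δ/4) (b - δ/4) \ U, ?_, isClosed_Icc.sdiff hUopen, ?_, ?_⟩
  · intro x hx
    obtain ⟨⟨h1, h2⟩, -⟩ := hx
    exact ⟨by linarith, by linarith⟩
  · exact no_rat_interior fun r hr => hr.2 (hrat r)
  · by_contra h
    push_neg at h
    have h0 : volume (Icc (a + δ/4) (b - δ/4) \ U) = 0 := le_antisymm h zero_le
    have hsub : Icc (a + δ/4) (b - δ/4) ⊆ (Icc (a + δ/4) (b - δ/4) \ U) ∪ U := fun x hx => by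
      by_cases hxU : x ∈ U
      · exact Or.inr hxU
      · exact Or.inl ⟨hx, hxU⟩
    have hle := (measure_mono hsub).trans (measure_union_le (μ := volume) _ U)
    have h2 : (b - δ/4) - (a + δ/4) = δ/2 := by rw [hδdef]; ring
    rw [h0, zero_add, Real.volume_Icc, h2] at hle
    have := (ENNReal.ofReal_le_ofReal_iff (by linarith)).1 (hle.trans hUvol)
    linarith

lemma step_main {a b : ℝ} (hab : a < b) {S : Set ℝ} (hS : IsClosed S) (hSi : interior S = ∅) :
    ∃ A B : Set ℝ, IsClosed A ∧ IsClosed B ∧ interior A = ∅ ∧ interior B = ∅ ∧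
      0 < volume A ∧ 0 < volume B ∧ Disjoint A B ∧ Disjoint A S ∧ Disjoint B S ∧
      A ⊆ Ioo a b ∧ B ⊆ Ioo a b := by
  have hne : ¬ (Ioo a b ⊆ S) := by
    intro hsub
    have h2 := interior_maximal hsub isOpen_Ioo
    rw [hSi, subset_empty_iff] at h2
    exact (Set.nonempty_Ioo.2 hab).ne_empty h2
  obtain ⟨x, hx, hxS⟩ := not_subset.1 hne
  have hopen : IsOpen (Ioo a b ∩ Sᶜ) := isOpen_Ioo.inter hS.isOpen_compl
  obtain ⟨ε, hε, hball⟩ := Metric.isOpen_iff.1 hopen x ⟨hx, hxS⟩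
  rw [Real.ball_eq_Ioo] at hball
  obtain ⟨A, hA, hAc, hAi, hAv⟩ := exists_fat (x - ε) x (by linarith)
  obtain ⟨B, hB, hBc, hBi, hBv⟩ := exists_fat x (x + ε) (by linarith)
  have hAsub : A ⊆ Ioo a b ∩ Sᶜ := fun y hy => hball ⟨(hA hy).1, lt_trans (hA hy).2 (by linarith)⟩
  have hBsub : B ⊆ Ioo a b ∩ Sᶜ := fun y hy => hball ⟨lt_trans (by linarith) (hB hy).1, (hB hy).2⟩
  refine ⟨A, B, hAc, hBc, hAi, hBi, hAv, hBv, ?_, ?_, ?_, fun y hy => (hAsub hy).1,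
    fun y hy => (hBsub hy).1⟩
  · exact Set.disjoint_left.2 fun y hyA hyB => absurd ((hB hyB).1) (not_lt.2 (hA hyA).2.le)
  · exact Set.disjoint_left.2 fun y hyA hyS => (hAsub hyA).2 hyS
  · exact Set.disjoint_left.2 fun y hyB hyS => (hBsub hyB).2 hyS

lemma step_any (a b : ℝ) (S : Set ℝ) :
    ∃ A B : Set ℝ, IsClosed A ∧ IsClosed B ∧ interior A = ∅ ∧ interior B = ∅ ∧
      0 < volume A ∧ 0 < volume B ∧ Disjoint A B ∧
      (IsClosed S → interior S = ∅ →
        Disjoint A S ∧ Disjoint B S ∧ (a < b → A ⊆ Ioo a b ∧ B ⊆ Ioo a b)) := by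
  by_cases hS : IsClosed S ∧ interior S = ∅
  · by_cases hab : a < b
    · obtain ⟨A, B, h1, h2, h3, h4, h5, h6, h7, h8, h9, h10, h11⟩ := step_main hab hS.1 hS.2
      exact ⟨A, B, h1, h2, h3, h4, h5, h6, h7, fun _ _ => ⟨h8, h9, fun _ => ⟨h10, h11⟩⟩⟩
    · obtain ⟨A, B, h1, h2, h3, h4, h5, h6, h7, h8, h9, -, -⟩ :=
        step_main (zero_lt_one (α := ℝ)) hS.1 hS.2
      exact ⟨A, B, h1, h2, h3, h4, h5, h6, h7, fun _ _ => ⟨h8, h9, fun h => absurd h hab⟩⟩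
  · obtain ⟨A, B, h1, h2, h3, h4, h5, h6, h7, -, -, -, -⟩ :=
      step_main (zero_lt_one (α := ℝ)) isClosed_empty interior_empty
    exact ⟨A, B, h1, h2, h3, h4, h5, h6, h7, fun hc hi => absurd ⟨hc, hi⟩ hS⟩

noncomputable def pick (a b : ℝ) (S : Set ℝ) : Set ℝ × Set ℝ :=
  ⟨(step_any a b S).choose, (step_any a b S).choose_spec.choose⟩

lemma pick_spec (a b : ℝ) (S : Set ℝ) :
    IsClosed (pick a b S).1 ∧ IsClosed (pick a b S).2 ∧ interior (pick a b S).1 = ∅ ∧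
    interior (pick a b S).2 = ∅ ∧ 0 < volume (pick a b S).1 ∧ 0 < volume (pick a b S).2 ∧
    Disjoint (pick a b S).1 (pick a b S).2 ∧
    (IsClosed S → interior S = ∅ → Disjoint (pick a b S).1 S ∧ Disjoint (pick a b S).2 S ∧
      (a < b → (pick a b S).1 ⊆ Ioo a b ∧ (pick a b S).2 ⊆ Ioo a b)) :=
  (step_any a b S).choose_spec.choose_spec

noncomputable def e (n : ℕ) : ℚ × ℚ := (Denumerable.eqv (ℚ × ℚ)).symm n

noncomputable def SS : ℕ → Set ℝ
  | 0 => ∅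
  | n+1 => SS n ∪ (pick ((e n).1 : ℝ) ((e n).2 : ℝ) (SS n)).1
                ∪ (pick ((e n).1 : ℝ) ((e n).2 : ℝ) (SS n)).2

noncomputable def AA (n : ℕ) : Set ℝ := (pick ((e n).1 : ℝ) ((e n).2 : ℝ) (SS n)).1
noncomputable def BB (n : ℕ) : Set ℝ := (pick ((e n).1 : ℝ) ((e n).2 : ℝ) (SS n)).2

lemma SS_inv : ∀ n, IsClosed (SS n) ∧ interior (SS n) = ∅ := by
  intro n
  induction n with
  | zero => exact ⟨isClosed_empty, interior_empty⟩
  | succ n ih =>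
    obtain ⟨h1, h2, h3, h4, -, -, -, -⟩ := pick_spec ((e n).1 : ℝ) ((e n).2 : ℝ) (SS n)
    exact ⟨((ih.1.union h1).union h2),
      union_nd (ih.1.union h1) h2 (union_nd ih.1 h1 ih.2 h3) h4⟩

lemma AA_closed (n : ℕ) : IsClosed (AA n) := (pick_spec _ _ _).1
lemma BB_closed (n : ℕ) : IsClosed (BB n) := (pick_spec _ _ _).2.1
lemma AA_pos (n : ℕ) : 0 < volume (AA n) := (pick_spec _ _ _).2.2.2.2.1
lemma BB_pos (n : ℕ) : 0 < volume (BB n) := (pick_spec _ _ _).2.2.2.2.2.1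
lemma AB_disj (n : ℕ) : Disjoint (AA n) (BB n) := (pick_spec _ _ _).2.2.2.2.2.2.1
lemma AS_disj (n : ℕ) : Disjoint (AA n) (SS n) :=
  ((pick_spec _ _ _).2.2.2.2.2.2.2 (SS_inv n).1 (SS_inv n).2).1
lemma BS_disj (n : ℕ) : Disjoint (BB n) (SS n) :=
  ((pick_spec _ _ _).2.2.2.2.2.2.2 (SS_inv n).1 (SS_inv n).2).2.1
lemma AB_sub (n : ℕ) (h : ((e n).1 : ℝ) < ((e n).2 : ℝ)) :
    AA n ⊆ Ioo ((e n).1 : ℝ) ((e n).2 : ℝ) ∧ BB n ⊆ Ioo ((e n).1 : ℝ) ((e n).2 : ℝ) :=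
  ((pick_spec _ _ _).2.2.2.2.2.2.2 (SS_inv n).1 (SS_inv n).2).2.2 h

lemma sub_SS_succ (n : ℕ) : AA n ∪ BB n ⊆ SS (n+1) := by
  rw [show SS (n+1) = SS n ∪ AA n ∪ BB n from rfl]
  intro x hx
  rcases hx with h | h
  · exact Or.inl (Or.inr h)
  · exact Or.inr h

lemma SS_mono : ∀ {n m : ℕ}, n ≤ m → SS n ⊆ SS m := by
  intro n m h
  induction h with
  | refl => exact subset_refl _
  | @step m h ih =>
    refine ih.trans ?_
    rw [show SS (m+1) = SS m ∪ AA m ∪ BB m from rfl]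
    exact subset_union_left.trans subset_union_left

theorem interleaved_sets :
    ∃ P N : Set ℝ, MeasurableSet P ∧ MeasurableSet N ∧ Disjoint P N ∧
      volume (univ \ (P ∪ N)) = 0 ∧
      ∀ a b : ℝ, a < b →
        0 < volume (Ioo a b ∩ P) ∧ 0 < volume (Ioo a b ∩ N) := by
  set P : Set ℝ := ⋃ n, AA n with hP
  refine ⟨P, Pᶜ, ?_, ?_, disjoint_compl_right, ?_, ?_⟩
  · exact MeasurableSet.iUnion fun n => (AA_closed n).measurableSet
  · exact (MeasurableSet.iUnion fun n => (AA_closed n).measurableSet).compl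
  · rw [union_compl_self, diff_self]; exact measure_empty
  · intro a b hab
    obtain ⟨p, hap, hpb⟩ := exists_rat_btwn hab
    obtain ⟨q, hpq, hqb⟩ := exists_rat_btwn hpb
    obtain ⟨n, hn⟩ := (Denumerable.eqv (ℚ × ℚ)).symm.surjective (p, q)
    have hen : e n = (p, q) := hn
    have hpq' : ((e n).1 : ℝ) < ((e n).2 : ℝ) := by rw [hen]; exact_mod_cast hpq
    obtain ⟨hAsub, hBsub⟩ := AB_sub n hpq'
    have hIoo : Ioo ((e n).1 : ℝ) ((e n).2 : ℝ) ⊆ Ioo a b := by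
      rw [hen]
      exact Ioo_subset_Ioo hap.le hqb.le
    constructor
    · refine lt_of_lt_of_le (AA_pos n) (measure_mono fun x hx => ?_)
      exact ⟨hIoo (hAsub hx), mem_iUnion.2 ⟨n, hx⟩⟩
    · refine lt_of_lt_of_le (BB_pos n) (measure_mono fun x hx => ?_)
      refine ⟨hIoo (hBsub hx), fun hxP => ?_⟩
      obtain ⟨k, hk⟩ := mem_iUnion.1 hxP
      rcases lt_trichotomy k n with h | h | h
      · exact (BS_disj n).le_bot ⟨hx, SS_mono h ((sub_SS_succ k) (Or.inl hk))⟩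
      · exact (AB_disj n).le_bot ⟨h ▸ hk, hx⟩
      · exact (AS_disj k).le_bot ⟨hk, SS_mono h ((sub_SS_succ n) (Or.inr hx))⟩
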